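/- A K-noetherian K-integral graded ring R is a K-Krull ring if and only if it is K-normal. -/

import Mathlib

set_option linter.unusedSectionVars false
set_option maxHeartbeats 800000

section

universe u v

variable {K : Type v} {R : Type u} [AddCommGroup K] [DecidableEq K] [CommRing R]
  (𝒜 : K → AddSubgroup R) [GradedRing 𝒜]

/-- The multiplicative set of nonzero homogeneous elements. -/
def homNonzeroSub : Submonoid R :=
  Submonoid.closure {r : R | SetLike.IsHomogeneousElem 𝒜 r ∧ r ≠ 0}

/-- The homogeneous fraction ring `Q⁺(R) = (R⁺)⁻¹R`. -/
abbrev QPlus := Localization (homNonzeroSub 𝒜)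

/-- Homogeneous elements of `Q⁺(R)`: fractions of homogeneous elements. -/
def HomFrac (x : QPlus 𝒜) : Prop :=
  ∃ (r s : R) (hs : s ∈ homNonzeroSub 𝒜),
    SetLike.IsHomogeneousElem 𝒜 r ∧ SetLike.IsHomogeneousElem 𝒜 s ∧ x = Localization.mk r ⟨s, hs⟩



/-- A discrete `K`-valuation on `Q⁺(R)`: a surjection onto `ℤ`, additive on products of
nonzero homogeneous elements, satisfying the valuation inequality on homogeneous sums. -/
def IsKVal (ν : QPlus 𝒜 → ℤ) : Prop :=
  (∀ x y : QPlus 𝒜, HomFrac 𝒜 x → HomFrac 𝒜 y → x ≠ 0 → y ≠ 0 →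
    ν (x * y) = ν x + ν y) ∧
  (∀ x y : QPlus 𝒜, HomFrac 𝒜 x → HomFrac 𝒜 y → HomFrac 𝒜 (x + y) →
    x ≠ 0 → y ≠ 0 → x + y ≠ 0 → min (ν x) (ν y) ≤ ν (x + y)) ∧
  (∀ n : ℤ, ∃ x : QPlus 𝒜, HomFrac 𝒜 x ∧ x ≠ 0 ∧ ν x = n)

/-- `R` is a `K`-Krull ring: it is defined inside `Q⁺(R)` by a family of discrete
`K`-valuations of finite character. -/
def IsKKrullRing : Prop :=
  ∃ (ι : Type u) (ν : ι → QPlus 𝒜 → ℤ),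
    (∀ i, IsKVal 𝒜 (ν i)) ∧
    (∀ x : QPlus 𝒜, HomFrac 𝒜 x → x ≠ 0 → {i : ι | ν i x ≠ 0}.Finite) ∧
    (∀ x : QPlus 𝒜, HomFrac 𝒜 x → x ≠ 0 →
      ((∀ i, 0 ≤ ν i x) ↔ ∃ r : R, algebraMap R (QPlus 𝒜) r = x))

/-- `R` is `K`-normal: every homogeneous fraction integral over `R` lies in `R`. -/
def KNormalRing : Prop :=
  ∀ x : QPlus 𝒜, HomFrac 𝒜 x → IsIntegral R x → ∃ r : R, algebraMap R (QPlus 𝒜) r = x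

/-- `R` is `K`-noetherian: ascending chains of `K`-graded ideals stabilize. -/
def KNoetherian : Prop :=
  ∀ f : ℕ →o Ideal R, (∀ n, (f n).IsHomogeneous 𝒜) → ∃ n, ∀ m, n ≤ m → f m = f n

/-- `R` is `K`-integral: no homogeneous zero divisors. -/
def KIntegralRing : Prop :=
  ∀ a b : R, SetLike.IsHomogeneousElem 𝒜 a → SetLike.IsHomogeneousElem 𝒜 b → a * b = 0 → a = 0 ∨ b = 0

namespace Stmt14Aux

variable [Nontrivial R]

lemma one_mem_set : (1:R) ∈ {r : R | SetLike.IsHomogeneousElem 𝒜 r ∧ r ≠ 0} :=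
  ⟨SetLike.isHomogeneousElem_one 𝒜, one_ne_zero⟩

variable {𝒜}

lemma mem_homNonzeroSub (hint : KIntegralRing 𝒜) {s : R} :
    s ∈ homNonzeroSub 𝒜 ↔ SetLike.IsHomogeneousElem 𝒜 s ∧ s ≠ 0 := by
  constructor
  · intro h
    induction h using Submonoid.closure_induction with
    | mem x hx => exact hx
    | one => exact one_mem_set 𝒜
    | mul x y hx hy ihx ihy =>
      refine ⟨SetLike.IsHomogeneousElem.mul ihx.1 ihy.1, fun h0 => ?_⟩
      rcases hint x y ihx.1 ihy.1 h0 with h | h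
      · exact ihx.2 h
      · exact ihy.2 h
  · intro h
    exact Submonoid.subset_closure h

lemma regular_of_mem (hint : KIntegralRing 𝒜) {s : R} (hs : s ∈ homNonzeroSub 𝒜) :
    ∀ x : R, s * x = 0 → x = 0 := by
  classical
  obtain ⟨⟨k, hk⟩, hs0⟩ := (mem_homNonzeroSub hint).1 hs
  intro x hx
  have hcomp : ∀ d : K, (DirectSum.decompose 𝒜 x d : R) = 0 := by
    intro d
    have h1 : (DirectSum.decompose 𝒜 (s * x) (k + d) : R)
        = s * (DirectSum.decompose 𝒜 x d : R) :=
      DirectSum.coe_decompose_mul_add_of_left_mem 𝒜 hk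
    rw [hx] at h1
    simp only [DirectSum.decompose_zero, DirectSum.zero_apply,
      ZeroMemClass.coe_zero] at h1
    rcases hint s _ ⟨k, hk⟩ ⟨d, SetLike.coe_mem _⟩ h1.symm with h | h
    · exact absurd h hs0
    · exact h
  have := DirectSum.sum_support_decompose 𝒜 x
  rw [← this]
  exact Finset.sum_eq_zero fun d _ => hcomp d

lemma homNonzeroSub_le_nonZeroDivisors (hint : KIntegralRing 𝒜) :
    homNonzeroSub 𝒜 ≤ nonZeroDivisors R := by
  intro s hs
  rw [mem_nonZeroDivisors_iff_right]
  intro x hx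
  exact regular_of_mem hint hs x (by rwa [mul_comm])

lemma algebraMap_injective (hint : KIntegralRing 𝒜) :
    Function.Injective (algebraMap R (QPlus 𝒜)) :=
  IsLocalization.injective _ (homNonzeroSub_le_nonZeroDivisors hint)

lemma nontrivial_QPlus (hint : KIntegralRing 𝒜) : Nontrivial (QPlus 𝒜) :=
  ⟨⟨algebraMap R (QPlus 𝒜) 1, algebraMap R (QPlus 𝒜) 0, fun h =>
    one_ne_zero ((algebraMap_injective hint) h)⟩⟩

lemma mk_eq_zero_iff (hint : KIntegralRing 𝒜) (r : R) (s : homNonzeroSub 𝒜) :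
    Localization.mk r s = 0 ↔ r = 0 := by
  rw [Localization.mk_eq_mk', IsLocalization.mk'_eq_zero_iff]
  constructor
  · rintro ⟨m, hm⟩
    exact regular_of_mem hint m.2 r hm
  · rintro rfl
    exact ⟨1, by simp⟩

-- ===== chunk 2: HomFrac lemmas =====
variable (𝒜) in
lemma homFrac_one : HomFrac 𝒜 1 :=
  ⟨1, 1, one_mem _, SetLike.isHomogeneousElem_one 𝒜, SetLike.isHomogeneousElem_one 𝒜,
    (Localization.mk_one).symm⟩

lemma algebraMap_mk' (r : R) :
    algebraMap R (QPlus 𝒜) r = Localization.mk r 1 := by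
  rw [← Localization.mk_algebraMap (M := homNonzeroSub 𝒜) (A := R) r]
  simp

lemma homFrac_algebraMap {r : R} (hr : SetLike.IsHomogeneousElem 𝒜 r) :
    HomFrac 𝒜 (algebraMap R (QPlus 𝒜) r) :=
  ⟨r, 1, one_mem _, hr, SetLike.isHomogeneousElem_one 𝒜, by rw [algebraMap_mk']; rfl⟩

lemma homFrac_mul {x y : QPlus 𝒜} (hx : HomFrac 𝒜 x) (hy : HomFrac 𝒜 y) :
    HomFrac 𝒜 (x * y) := by
  obtain ⟨r1, s1, hs1, hr1, hs1', rfl⟩ := hx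
  obtain ⟨r2, s2, hs2, hr2, hs2', rfl⟩ := hy
  exact ⟨r1 * r2, s1 * s2, mul_mem hs1 hs2, SetLike.IsHomogeneousElem.mul hr1 hr2,
    SetLike.IsHomogeneousElem.mul hs1' hs2', by rw [Localization.mk_mul]; rfl⟩

lemma exists_inv_of_homFrac (hint : KIntegralRing 𝒜) {x : QPlus 𝒜}
    (hx : HomFrac 𝒜 x) (hx0 : x ≠ 0) :
    ∃ y : QPlus 𝒜, HomFrac 𝒜 y ∧ x * y = 1 := by
  obtain ⟨r, s, hs, hr, hs', rfl⟩ := hx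
  have hr0 : r ≠ 0 := fun h => hx0 (by rw [h, (mk_eq_zero_iff hint 0 _ ).2 rfl])
  have hrmem : r ∈ homNonzeroSub 𝒜 := (mem_homNonzeroSub hint).2 ⟨hr, hr0⟩
  refine ⟨Localization.mk s ⟨r, hrmem⟩, ⟨s, r, hrmem, hs', hr, rfl⟩, ?_⟩
  rw [Localization.mk_mul]
  rw [show (⟨s, hs⟩ : homNonzeroSub 𝒜) * ⟨r, hrmem⟩ = ⟨r * s, mul_mem hrmem hs⟩ by
    ext; simp [mul_comm]]
  exact Localization.mk_self (⟨r * s, mul_mem hrmem hs⟩ : homNonzeroSub 𝒜)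

lemma isUnit_of_homFrac (hint : KIntegralRing 𝒜) {x : QPlus 𝒜}
    (hx : HomFrac 𝒜 x) (hx0 : x ≠ 0) : IsUnit x := by
  obtain ⟨y, _, hxy⟩ := exists_inv_of_homFrac hint hx hx0
  exact IsUnit.of_mul_eq_one _ hxy

/-- A nonzero homogeneous fraction in the image of `R` has a homogeneous preimage. -/
lemma exists_homog_preimage (hint : KIntegralRing 𝒜) {x : QPlus 𝒜}
    (hx : HomFrac 𝒜 x) (hx0 : x ≠ 0) {r : R}
    (hr : algebraMap R (QPlus 𝒜) r = x) :
    SetLike.IsHomogeneousElem 𝒜 r ∧ r ≠ 0 := by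
  classical
  obtain ⟨a, s, hs, ha, hs', rfl⟩ := hx
  have hr0 : r ≠ 0 := by
    rintro rfl
    exact hx0 (by rw [← hr, map_zero])
  -- `r * s = a`
  have key : r * s = a := by
    apply algebraMap_injective hint
    have h1 : algebraMap R (QPlus 𝒜) r
        = IsLocalization.mk' (QPlus 𝒜) a (⟨s, hs⟩ : homNonzeroSub 𝒜) := by
      rw [hr, Localization.mk_eq_mk']
    have h2 := IsLocalization.eq_mk'_iff_mul_eq.mp h1
    rw [map_mul]
    exact h2
  obtain ⟨k, hk⟩ := hs'
  obtain ⟨j, hj⟩ := ha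
  refine ⟨⟨j - k, ?_⟩, hr0⟩
  have hcomp : ∀ d : K, d ≠ j - k → (DirectSum.decompose 𝒜 r d : R) = 0 := by
    intro d hd
    have h2 : s * (DirectSum.decompose 𝒜 r d : R)
        = (DirectSum.decompose 𝒜 (s * r) (k + d) : R) :=
      (DirectSum.coe_decompose_mul_add_of_left_mem 𝒜 hk).symm
    rw [mul_comm s r, key] at h2
    rw [DirectSum.decompose_of_mem_ne 𝒜 hj (by
      intro h; exact hd (by rw [h]; abel))] at h2
    exact regular_of_mem hint hs _ h2
  have hsupp : r = (DirectSum.decompose 𝒜 r (j - k) : R) := by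
    conv_lhs => rw [← DirectSum.sum_support_decompose 𝒜 r]
    rw [Finset.sum_eq_single (j - k)]
    · intro b _ hb
      exact hcomp b hb
    · intro h
      simp [DFinsupp.notMem_support_iff.mp h]
  rw [hsupp]
  exact SetLike.coe_mem _

-- ===== chunk 3: Krull implies Normal =====

lemma homFrac_pow {x : QPlus 𝒜} (hx : HomFrac 𝒜 x) (m : ℕ) : HomFrac 𝒜 (x ^ m) := by
  induction m with
  | zero => simpa using homFrac_one 𝒜
  | succ k ih => rw [pow_succ]; exact homFrac_mul ih hx

lemma isKVal_val_one {ν : QPlus 𝒜 → ℤ} (hν : IsKVal 𝒜 ν ) (hQ : Nontrivial (QPlus 𝒜)) :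
    ν 1 = 0 := by
  have := hν.1 1 1 (homFrac_one 𝒜) (homFrac_one 𝒜) one_ne_zero one_ne_zero
  rw [mul_one] at this
  omega

lemma isKVal_val_pow {ν : QPlus 𝒜 → ℤ} (hν : IsKVal 𝒜 ν ) (hQ : Nontrivial (QPlus 𝒜))
    {x : QPlus 𝒜} (hx : HomFrac 𝒜 x) (hx0 : IsUnit x) (m : ℕ) :
    ν (x ^ m) = m * ν x := by
  induction m with
  | zero => simpa using isKVal_val_one hν hQ
  | succ k ih =>
    rw [pow_succ, hν.1 (x ^ k) x (homFrac_pow hx k) hx (hx0.pow k).ne_zero hx0.ne_zero, ih]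
    push_cast
    ring

lemma pow_eq_sum {x : QPlus 𝒜} (hx : IsIntegral R x) (hQ : Nontrivial (QPlus 𝒜)) :
    ∃ n : ℕ, 0 < n ∧ ∃ c : ℕ → R,
      x ^ n = ∑ k ∈ Finset.range n, algebraMap R (QPlus 𝒜) (c k) * x ^ k := by
  obtain ⟨p, hmonic, heval⟩ := hx
  have hn : 0 < p.natDegree := by
    rcases Nat.eq_zero_or_pos p.natDegree with h | h
    · exfalso
      have : p = 1 := Polynomial.Monic.natDegree_eq_zero hmonic |>.mp h
      rw [this] at heval
      simp at heval
    · exact h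
  refine ⟨p.natDegree, hn, fun k => -(p.coeff k), ?_⟩
  have hsum := Polynomial.eval₂_eq_sum_range (p := p) (f := algebraMap R (QPlus 𝒜)) (x := x)
  rw [heval] at hsum
  rw [Finset.sum_range_succ, hmonic.coeff_natDegree, map_one, one_mul] at hsum
  have : x ^ p.natDegree
      = -∑ k ∈ Finset.range p.natDegree, algebraMap R (QPlus 𝒜) (p.coeff k) * x ^ k := by
    linear_combination -hsum
  rw [this, ← Finset.sum_neg_distrib]
  refine Finset.sum_congr rfl fun k _ => ?_
  rw [map_neg, neg_mul]

lemma krull_implies_normal (hint : KIntegralRing 𝒜) (hk : IsKKrullRing 𝒜) :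
    KNormalRing 𝒜 := by
  classical
  haveI hQ : Nontrivial (QPlus 𝒜) := nontrivial_QPlus hint
  obtain ⟨ι, ν, hval, hfin, hmem⟩ := hk
  intro x hxfrac hxint
  by_cases hx0 : x = 0
  · exact ⟨0, by rw [map_zero, hx0]⟩
  obtain ⟨n, hn, c, hc⟩ := pow_eq_sum hxint hQ
  obtain ⟨a, s, hs, ha, hs', hxeq⟩ := hxfrac
  have hxfrac : HomFrac 𝒜 x := ⟨a, s, hs, ha, hs', hxeq⟩
  set φ := algebraMap R (QPlus 𝒜) with hφ
  have hs0 : (s : R) ≠ 0 := ((mem_homNonzeroSub hint).mp hs).2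
  have hφs_frac : HomFrac 𝒜 (φ s) := homFrac_algebraMap hs'
  have hφs_ne : φ s ≠ 0 := fun h => hs0 (algebraMap_injective hint (by rw [h, map_zero]))
  have hφs_unit : IsUnit (φ s) := isUnit_of_homFrac hint hφs_frac hφs_ne
  have hx_unit : IsUnit x := isUnit_of_homFrac hint hxfrac hx0
  -- φ s * x = φ a
  have hsx : φ s * x = φ a := by
    rw [hxeq, hφ, algebraMap_mk', algebraMap_mk', Localization.mk_mul, one_mul]
    have : Localization.mk (s * a) (⟨s, hs⟩ : homNonzeroSub 𝒜)
        = Localization.mk s ⟨s, hs⟩ * Localization.mk a 1 := by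
      rw [Localization.mk_mul, mul_one]
    rw [this, show Localization.mk s (⟨s, hs⟩ : homNonzeroSub 𝒜) = 1 from
      Localization.mk_self (⟨s, hs⟩ : homNonzeroSub 𝒜), one_mul]
  -- all powers of x, scaled by φ s ^ n, are in R
  have hpow : ∀ m : ℕ, ∃ r : R, φ r = φ s ^ n * x ^ m := by
    intro m
    induction m using Nat.strong_induction_on with
    | _ m ih =>
      rcases lt_or_ge m n with hmn | hmn
      · refine ⟨s ^ (n - m) * a ^ m, ?_⟩
        have hsplit : φ s ^ n = φ s ^ (n - m) * φ s ^ m := by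
          rw [← pow_add, Nat.sub_add_cancel hmn.le]
        rw [map_mul, map_pow, map_pow, ← hsx, mul_pow, hsplit]
        ring
      · have hterm : ∀ k ∈ Finset.range n, ∃ r : R, φ r = φ s ^ n * x ^ (m - n + k) := by
          intro k hk
          exact ih (m - n + k) (by
            have := Finset.mem_range.mp hk
            omega)
        choose g hg using hterm
        refine ⟨∑ k ∈ (Finset.range n).attach, c k * g k k.2, ?_⟩
        rw [map_sum]
        have hxm : x ^ m = ∑ k ∈ Finset.range n, φ (c k) * x ^ (m - n + k) := by
          have : x ^ m = x ^ (m - n) * x ^ n := by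
            rw [← pow_add]
            congr 1
            omega
          rw [this, hc, Finset.mul_sum]
          refine Finset.sum_congr rfl fun k hk => ?_
          rw [← mul_assoc, mul_comm (x ^ (m-n)) (φ (c k)), mul_assoc, ← pow_add]
        rw [hxm, Finset.mul_sum, ← Finset.sum_attach (Finset.range n)
          (fun k => φ s ^ n * (φ (c k) * x ^ (m - n + k)))]
        refine Finset.sum_congr rfl fun k _ => ?_
        rw [map_mul, hg k k.2]
        ring
  -- conclude all valuations are nonnegative
  have hνx : ∀ i, 0 ≤ ν i x := by
    intro i
    by_contra hneg
    push_neg at hneg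
    set T : ℕ := (ν i (φ s)).toNat with hT
    have hTle : ν i (φ s) ≤ (T : ℤ) := Int.self_le_toNat _
    set m : ℕ := n * T + 1 with hm
    obtain ⟨r, hr⟩ := hpow m
    have hz_frac : HomFrac 𝒜 (φ s ^ n * x ^ m) := homFrac_mul (homFrac_pow hφs_frac n) (homFrac_pow hxfrac m)
    have hz_unit : IsUnit (φ s ^ n * x ^ m) := (hφs_unit.pow n).mul (hx_unit.pow m)
    have h0 : 0 ≤ ν i (φ s ^ n * x ^ m) :=
      ((hmem _ hz_frac hz_unit.ne_zero).mpr ⟨r, hr⟩) i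
    have hadd : ν i (φ s ^ n * x ^ m) = n * ν i (φ s) + m * ν i x := by
      rw [(hval i).1 _ _ (homFrac_pow hφs_frac n) (homFrac_pow hxfrac m) (hφs_unit.pow n).ne_zero
        (hx_unit.pow m).ne_zero, isKVal_val_pow (hval i) hQ hφs_frac hφs_unit,
        isKVal_val_pow (hval i) hQ hxfrac hx_unit]
    rw [hadd] at h0
    have hmm : (m : ℤ) = n * T + 1 := by rw [hm]; push_cast; ring
    have h1 : ν i x ≤ -1 := by omega
    nlinarith [mul_le_mul_of_nonneg_left hTle (by positivity : (0:ℤ) ≤ (n:ℤ)),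
      mul_le_mul_of_nonneg_left h1 (by positivity : (0:ℤ) ≤ (m:ℤ))]
  exact (hmem x hxfrac hx0).mp hνx

-- ===== chunk 4: the group of homogeneous units and divisorial calculus =====
open Pointwise

def homUnits (hint : KIntegralRing 𝒜) : Subgroup (QPlus 𝒜)ˣ where
  carrier := {u | HomFrac 𝒜 (u : QPlus 𝒜)}
  one_mem' := homFrac_one 𝒜
  mul_mem' {a b} ha hb := by
    have h : ((a * b : (QPlus 𝒜)ˣ) : QPlus 𝒜) = (a : QPlus 𝒜) * (b : QPlus 𝒜) := rfl
    simpa [Set.mem_setOf_eq, h] using homFrac_mul ha hb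
  inv_mem' {u} hu := by
    haveI := nontrivial_QPlus hint
    obtain ⟨y, hy, hxy⟩ := exists_inv_of_homFrac hint hu u.ne_zero
    have h : ((u⁻¹ : (QPlus 𝒜)ˣ) : QPlus 𝒜) = y := by
      calc ((u⁻¹ : (QPlus 𝒜)ˣ) : QPlus 𝒜) = ↑u⁻¹ * ((u : QPlus 𝒜) * y) := by
            rw [hxy, mul_one]
        _ = (((u⁻¹ : (QPlus 𝒜)ˣ) : QPlus 𝒜) * (u : QPlus 𝒜)) * y := by ring
        _ = y := by rw [Units.inv_mul, one_mul]
    simpa [Set.mem_setOf_eq, h] using hy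

variable {hint : KIntegralRing 𝒜}

/-- The value in `QPlus` of an element of the group of homogeneous units. -/
def gval (g : homUnits hint) : QPlus 𝒜 := ((g : (QPlus 𝒜)ˣ) : QPlus 𝒜)

@[simp] lemma gval_mul (a b : homUnits hint) : gval a * gval b = gval (a * b) := rfl

@[simp] lemma gval_one : gval (1 : homUnits hint) = 1 := rfl

lemma gval_homFrac (g : homUnits hint) : HomFrac 𝒜 (gval g) := g.2

lemma gval_ne_zero (g : homUnits hint) : gval g ≠ 0 := by
  haveI := nontrivial_QPlus hint
  exact (g : (QPlus 𝒜)ˣ).ne_zero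

lemma gval_injective : Function.Injective (gval (hint := hint)) := by
  intro a b h
  exact Subtype.ext (Units.ext h)

/-- The submonoid of `Γ` corresponding to (nonzero homogeneous elements of) `R`. -/
def Mset (hint : KIntegralRing 𝒜) : Set ↥(homUnits hint) :=
  {g | gval g ∈ Set.range ⇑(algebraMap R (QPlus 𝒜))}

lemma one_mem_Mset : (1 : homUnits hint) ∈ Mset hint := ⟨1, by simp⟩

lemma mul_mem_Mset {a b : homUnits hint} (ha : a ∈ Mset hint) (hb : b ∈ Mset hint) :
    a * b ∈ Mset hint := by
  obtain ⟨r1, h1⟩ := ha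
  obtain ⟨r2, h2⟩ := hb
  exact ⟨r1 * r2, by rw [map_mul, h1, h2, gval_mul]⟩

lemma add_mem_Mset {a b c : homUnits hint} (h : gval a + gval b = gval c)
    (ha : a ∈ Mset hint) (hb : b ∈ Mset hint) : c ∈ Mset hint := by
  obtain ⟨r1, h1⟩ := ha
  obtain ⟨r2, h2⟩ := hb
  exact ⟨r1 + r2, by rw [map_add, h1, h2, h]⟩

/-- `toGam x`: the element of `Γ` with value a given nonzero homogeneous fraction. -/
noncomputable def toGam (hint : KIntegralRing 𝒜) {x : QPlus 𝒜} (hx : HomFrac 𝒜 x) (hx0 : x ≠ 0) :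
    ↥(homUnits hint) :=
  ⟨(isUnit_of_homFrac hint hx hx0).unit, by
    exact (by rw [IsUnit.unit_spec]; exact hx :
      HomFrac 𝒜 (((isUnit_of_homFrac hint hx hx0).unit : (QPlus 𝒜)ˣ) : QPlus 𝒜))⟩

@[simp] lemma gval_toGam {x : QPlus 𝒜} (hx : HomFrac 𝒜 x) (hx0 : x ≠ 0) :
    gval (toGam hint hx hx0) = x := IsUnit.unit_spec _

/-- The residual `(M : S)` of a set of homogeneous units. -/
def colA (hint : KIntegralRing 𝒜) (S : Set ↥(homUnits hint)) : Set ↥(homUnits hint) :=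
  {h | ∀ s ∈ S, h * s ∈ Mset hint}

/-- The divisorial closure. -/
def vcl (hint : KIntegralRing 𝒜) (S : Set ↥(homUnits hint)) : Set ↥(homUnits hint) :=
  colA hint (colA hint S)

lemma colA_anti {S T : Set ↥(homUnits hint)} (h : S ⊆ T) : colA hint T ⊆ colA hint S :=
  fun x hx s hs => hx s (h hs)

lemma subset_vcl (S : Set ↥(homUnits hint)) : S ⊆ vcl hint S :=
  fun s hs h hh => by rw [mul_comm]; exact hh s hs

lemma vcl_mono {S T : Set ↥(homUnits hint)} (h : S ⊆ T) : vcl hint S ⊆ vcl hint T :=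
  colA_anti (colA_anti h)

lemma colA_vcl (S : Set ↥(homUnits hint)) : colA hint (vcl hint S) = colA hint S :=
  le_antisymm (colA_anti (subset_vcl S)) (subset_vcl (colA hint S))

lemma vcl_idem (S : Set ↥(homUnits hint)) : vcl hint (vcl hint S) = vcl hint S :=
  congrArg (colA hint) (colA_vcl S)

lemma colA_Mset : colA hint (Mset hint) = Mset hint := by
  ext h
  constructor
  · intro hh
    simpa using hh 1 one_mem_Mset
  · intro hh s hs
    exact mul_mem_Mset hh hs

lemma vcl_Mset : vcl hint (Mset hint) = Mset hint := by
  unfold vcl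
  rw [colA_Mset, colA_Mset]

lemma mset_stable_colA (S : Set ↥(homUnits hint)) {m h : ↥(homUnits hint)}
    (hm : m ∈ Mset hint) (hh : h ∈ colA hint S) : m * h ∈ colA hint S := by
  intro s hs
  rw [mul_assoc]
  exact mul_mem_Mset hm (hh s hs)

lemma add_mem_colA (S : Set ↥(homUnits hint)) {a b c : ↥(homUnits hint)}
    (h : gval a + gval b = gval c) (ha : a ∈ colA hint S) (hb : b ∈ colA hint S) :
    c ∈ colA hint S := by
  intro s hs
  refine add_mem_Mset (a := a * s) (b := b * s) ?_ (ha s hs) (hb s hs)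
  rw [← gval_mul, ← gval_mul, ← gval_mul, ← h]
  ring

/-- mul of sets vs vcl : `(vcl S) * T ⊆ vcl (S * T)`. -/
lemma vcl_mul_subset (S T : Set ↥(homUnits hint)) :
    (vcl hint S) * T ⊆ vcl hint (S * T) := by
  rintro - ⟨x, hx, y, hy, rfl⟩
  intro c hc
  have hcy : c * y ∈ colA hint S := by
    intro s hs
    have : s * y ∈ S * T := Set.mul_mem_mul hs hy
    have h2 := hc _ this
    have heq : c * y * s = c * (s * y) := by rw [mul_assoc, mul_comm y s]
    rw [heq]
    exact h2
  have := hx _ hcy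
  have heq : x * y * c = x * (c * y) := by rw [mul_assoc, mul_comm y c]
  rw [heq]
  exact this

lemma vcl_mul_vcl (S T : Set ↥(homUnits hint)) :
    vcl hint ((vcl hint S) * (vcl hint T)) = vcl hint (S * T) := by
  apply le_antisymm
  · have h1 : (vcl hint S) * (vcl hint T) ⊆ vcl hint (S * vcl hint T) := vcl_mul_subset _ _
    have h2 : S * vcl hint T ⊆ vcl hint (T * S) := by
      rw [mul_comm]
      exact vcl_mul_subset _ _
    have h3 : (vcl hint S) * (vcl hint T) ⊆ vcl hint (S * T) := by
      refine h1.trans ?_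
      have := vcl_mono h2
      rw [vcl_idem] at this
      refine this.trans ?_
      rw [mul_comm]
    have := vcl_mono h3
    rwa [vcl_idem] at this
  · exact vcl_mono (Set.mul_subset_mul (subset_vcl S) (subset_vcl T))


lemma vcl_of_vcl_mul (S T : Set ↥(homUnits hint)) :
    vcl hint ((vcl hint S) * T) = vcl hint (S * T) := by
  apply le_antisymm
  · have h1 : (vcl hint S) * T ⊆ vcl hint (S * T) := vcl_mul_subset _ _
    have := vcl_mono h1
    rwa [vcl_idem] at this
  · exact vcl_mono (Set.mul_subset_mul (subset_vcl S) subset_rfl)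
-- ===== chunk 5: divisorial fractional ideals =====

/-- A divisorial fractional ideal of `M` in `Γ`. -/
@[ext]
structure DivIdl (hint : KIntegralRing 𝒜) : Type u where
  carrier : Set ↥(homUnits hint)
  nonempty' : carrier.Nonempty
  bounded' : ∃ c, ∀ s ∈ carrier, c * s ∈ Mset hint
  divis' : vcl hint carrier = carrier

namespace DivIdl

instance : PartialOrder (DivIdl hint) where
  le A B := A.carrier ⊆ B.carrier
  le_refl A := subset_rfl
  le_trans A B C h1 h2 := Set.Subset.trans h1 h2
  le_antisymm A B h1 h2 := DivIdl.ext (le_antisymm h1 h2)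

lemma le_def {A B : DivIdl hint} : A ≤ B ↔ A.carrier ⊆ B.carrier := ⟨fun h => h, fun h => h⟩

lemma bound_vcl {S : Set ↥(homUnits hint)} {c : ↥(homUnits hint)}
    (hc : ∀ s ∈ S, c * s ∈ Mset hint) : ∀ s ∈ vcl hint S, c * s ∈ Mset hint := by
  intro h hh
  rw [mul_comm]
  exact hh c hc

lemma stable (A : DivIdl hint) {m g : ↥(homUnits hint)}
    (hm : m ∈ Mset hint) (hg : g ∈ A.carrier) : m * g ∈ A.carrier := by
  rw [← A.divis'] at hg ⊢
  exact mset_stable_colA _ hm hg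

instance : CommMonoid (DivIdl hint) where
  mul A B := ⟨vcl hint (A.carrier * B.carrier),
    (A.nonempty'.mul B.nonempty').mono (subset_vcl _),
    by
      obtain ⟨c, hc⟩ := A.bounded'
      obtain ⟨d, hd⟩ := B.bounded'
      refine ⟨c * d, bound_vcl ?_⟩
      rintro - ⟨x, hx, y, hy, rfl⟩
      have : c * d * (x * y) = (c * x) * (d * y) := by
        rw [mul_mul_mul_comm]
      rw [this]
      exact mul_mem_Mset (hc x hx) (hd y hy),
    vcl_idem _⟩
  one := ⟨Mset hint, ⟨1, one_mem_Mset⟩, ⟨1, fun s hs => by rwa [one_mul]⟩, vcl_Mset⟩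
  mul_assoc A B C := by
    apply DivIdl.ext
    show vcl hint (vcl hint (A.carrier * B.carrier) * C.carrier)
      = vcl hint (A.carrier * vcl hint (B.carrier * C.carrier))
    rw [show A.carrier * vcl hint (B.carrier * C.carrier)
        = vcl hint (B.carrier * C.carrier) * A.carrier from mul_comm _ _]
    rw [vcl_of_vcl_mul, vcl_of_vcl_mul, mul_assoc]
    rw [mul_comm]
  mul_comm A B := by
    apply DivIdl.ext
    show vcl hint (A.carrier * B.carrier) = vcl hint (B.carrier * A.carrier)
    rw [mul_comm]
  one_mul A := by
    apply DivIdl.ext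
    show vcl hint (Mset hint * A.carrier) = A.carrier
    have h1 : Mset hint * A.carrier = A.carrier := by
      apply le_antisymm
      · rintro - ⟨m, hm, a, ha, rfl⟩
        exact A.stable hm ha
      · intro a ha
        exact ⟨1, one_mem_Mset, a, ha, (one_mul a)⟩
    rw [h1, A.divis']
  mul_one A := by
    apply DivIdl.ext
    show vcl hint (A.carrier * Mset hint) = A.carrier
    have h1 : A.carrier * Mset hint = A.carrier := by
      apply le_antisymm
      · rintro - ⟨a, ha, m, hm, rfl⟩
        show a * m ∈ A.carrier
        rw [mul_comm]
        exact A.stable hm ha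
      · intro a ha
        exact ⟨a, ha, 1, one_mem_Mset, (mul_one a)⟩
    rw [h1, A.divis']

lemma mul_carrier (A B : DivIdl hint) :
    (A * B).carrier = vcl hint (A.carrier * B.carrier) := rfl

lemma one_carrier : (1 : DivIdl hint).carrier = Mset hint := rfl

/-- The candidate inverse `(M : A)`. -/
def dinv (A : DivIdl hint) : DivIdl hint where
  carrier := colA hint A.carrier
  nonempty' := A.bounded'
  bounded' := by
    obtain ⟨a, ha⟩ := A.nonempty'
    exact ⟨a, fun h hh => by rw [mul_comm]; exact hh a ha⟩
  divis' := colA_vcl A.carrier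

lemma dinv_carrier (A : DivIdl hint) : (dinv A).carrier = colA hint A.carrier := rfl

lemma carrier_subset_of_le_one {A B : DivIdl hint} (hB : B.carrier ⊆ Mset hint) :
    (A * B).carrier ⊆ A.carrier := by
  rw [mul_carrier]
  have h1 : A.carrier * B.carrier ⊆ A.carrier := by
    rintro - ⟨a, ha, b, hb, rfl⟩
    show a * b ∈ A.carrier
    rw [mul_comm]
    exact A.stable (hB hb) ha
  calc vcl hint (A.carrier * B.carrier) ⊆ vcl hint A.carrier := vcl_mono h1
    _ = A.carrier := A.divis'

lemma mul_dinv_self_carrier_subset (A : DivIdl hint) :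
    (A * dinv A).carrier ⊆ Mset hint := by
  rw [mul_carrier]
  have h1 : A.carrier * (dinv A).carrier ⊆ Mset hint := by
    rintro - ⟨a, ha, b, hb, rfl⟩
    show a * b ∈ Mset hint
    rw [mul_comm]
    exact hb a ha
  calc vcl hint (A.carrier * (dinv A).carrier) ⊆ vcl hint (Mset hint) := vcl_mono h1
    _ = Mset hint := vcl_Mset

end DivIdl

-- ===== chunk 6: complete integral closedness, inverses, and the Noetherian transfer =====

/-- `M` is completely integrally closed in `Γ`. -/
def CIC (hint : KIntegralRing 𝒜) : Prop :=
  ∀ g : ↥(homUnits hint), (∃ c, ∀ n : ℕ, c * g ^ n ∈ Mset hint) → g ∈ Mset hint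

namespace DivIdl

theorem mul_dinv (hcic : CIC hint) (A : DivIdl hint) : A * dinv A = 1 := by
  apply le_antisymm
  · exact mul_dinv_self_carrier_subset A
  · show Mset hint ⊆ (A * dinv A).carrier
    rw [mul_carrier]
    have hcol : colA hint (A.carrier * (dinv A).carrier) ⊆ Mset hint := by
      intro h hh
      obtain ⟨a₀, ha₀⟩ := A.nonempty'
      obtain ⟨b₀, hb₀⟩ := A.bounded'
      have hb₀' : b₀ ∈ colA hint A.carrier := hb₀
      have hpow : ∀ n : ℕ, h ^ n * b₀ ∈ colA hint A.carrier := by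
        intro n
        induction n with
        | zero => simpa using hb₀'
        | succ k ih =>
          intro a ha
          have hx : a * (h ^ k * b₀) ∈ A.carrier * (dinv A).carrier :=
            Set.mul_mem_mul ha ih
          have := hh _ hx
          have heq : h ^ (k + 1) * b₀ * a = h * (a * (h ^ k * b₀)) := by
            rw [pow_succ]
            ac_rfl
          rw [heq]
          exact this
      refine hcic h ⟨a₀ * b₀, fun n => ?_⟩
      have := hpow n a₀ ha₀
      have heq : a₀ * b₀ * h ^ n = h ^ n * b₀ * a₀ := by ac_rfl
      rw [heq]
      exact this
    intro m hm
    intro c hc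
    exact mul_mem_Mset hm (hcol hc)

lemma mul_cancel (hcic : CIC hint) {A B C : DivIdl hint} (h : A * B = A * C) : B = C := by
  have h2 := congrArg (fun X => dinv A * X) h
  simp only [← mul_assoc, mul_comm (dinv A) A, mul_dinv hcic A, one_mul] at h2
  exact h2

/-- The homogeneous ring ideal generated by (the `R`-elements of) a set of homogeneous units. -/
def ringIdl (S : Set ↥(homUnits hint)) : Ideal R :=
  Ideal.span {r : R | SetLike.IsHomogeneousElem 𝒜 r ∧ ∃ g ∈ S, algebraMap R (QPlus 𝒜) r = gval g}

lemma ringIdl_homogeneous (S : Set ↥(homUnits hint)) : (ringIdl S).IsHomogeneous 𝒜 :=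
  Ideal.homogeneous_span _ _ fun _ hx => hx.1

lemma ringIdl_mono {S T : Set ↥(homUnits hint)} (h : S ⊆ T) : ringIdl S ≤ ringIdl T := by
  apply Ideal.span_mono
  rintro r ⟨h1, g, hg, h2⟩
  exact ⟨h1, g, h hg, h2⟩

lemma mem_of_mem_ringIdl {S : Set ↥(homUnits hint)} (hS : vcl hint S = S)
    {r : R} (hr : r ∈ ringIdl S) {b : ↥(homUnits hint)}
    (hb : algebraMap R (QPlus 𝒜) r = gval b) : b ∈ S := by
  rw [← hS]
  intro c hc
  have key : ∀ x ∈ ringIdl S,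
      ∃ t : R, algebraMap R (QPlus 𝒜) x * gval c = algebraMap R (QPlus 𝒜) t := by
    intro x hx
    induction hx using Submodule.span_induction with
    | mem y hy =>
      obtain ⟨hyh, g, hg, hgy⟩ := hy
      obtain ⟨t, ht⟩ := hc g hg
      refine ⟨t, ?_⟩
      rw [hgy, gval_mul, mul_comm g c, ht]
    | zero => exact ⟨0, by simp⟩
    | add x y _ _ ihx ihy =>
      obtain ⟨t1, ht1⟩ := ihx
      obtain ⟨t2, ht2⟩ := ihy
      exact ⟨t1 + t2, by rw [map_add, map_add, add_mul, ht1, ht2]⟩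
    | smul r' x _ ihx =>
      obtain ⟨t, ht⟩ := ihx
      refine ⟨r' * t, ?_⟩
      have : r' • x = r' * x := rfl
      rw [this, map_mul, map_mul, mul_assoc, ht]
  obtain ⟨t, ht⟩ := key r hr
  exact ⟨t, by rw [← ht, ← gval_mul, hb]⟩

lemma ringIdl_ne {A B : DivIdl hint} (hAB : A ≤ B) (hBint : B.carrier ⊆ Mset hint)
    (hne : A ≠ B) : ringIdl A.carrier ≠ ringIdl B.carrier := by
  have hdiff : ∃ b ∈ B.carrier, b ∉ A.carrier := by
    by_contra hcon
    push_neg at hcon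
    exact hne (DivIdl.ext (le_antisymm hAB hcon))
  obtain ⟨b, hbB, hbA⟩ := hdiff
  obtain ⟨r, hrval⟩ := hBint hbB
  have hrhom := exists_homog_preimage hint (gval_homFrac b) (gval_ne_zero b) hrval
  intro hEq
  apply hbA
  have hrmem : r ∈ ringIdl B.carrier :=
    Ideal.subset_span ⟨hrhom.1, b, hbB, hrval⟩
  rw [← hEq] at hrmem
  exact mem_of_mem_ringIdl A.divis' hrmem hrval

/-- Existence of maximal elements in nonempty families of integral divisorial ideals. -/
lemma exists_maximal (hnoeth : KNoetherian 𝒜) (T : Set (DivIdl hint))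
    (hT : ∀ A ∈ T, A.carrier ⊆ Mset hint) (hne : T.Nonempty) :
    ∃ A ∈ T, ∀ B ∈ T, A ≤ B → B = A := by
  classical
  by_contra hcon
  push_neg at hcon
  have hstep : ∀ A ∈ T, ∃ B ∈ T, A ≤ B ∧ B ≠ A := by
    intro A hA
    obtain ⟨B, hB1, hB2, hB3⟩ := hcon A hA
    exact ⟨B, hB1, hB2, hB3⟩
  choose! step hstepT hstepLe hstepNe using hstep
  let f : ℕ → DivIdl hint := fun n => Nat.rec hne.choose (fun _ A => step A) n
  have hf0 : f 0 = hne.choose := rfl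
  have hfs : ∀ n, f (n + 1) = step (f n) := fun n => rfl
  have hfT : ∀ n, f n ∈ T := by
    intro n
    induction n with
    | zero => exact hne.choose_spec
    | succ k ih => rw [hfs]; exact hstepT _ ih
  have hmono : ∀ n, f n ≤ f (n + 1) := fun n => by
    rw [hfs]; exact hstepLe _ (hfT n)
  let F : ℕ →o Ideal R :=
    ⟨fun n => ringIdl (f n).carrier, monotone_nat_of_le_succ fun n => ringIdl_mono (hmono n)⟩
  obtain ⟨n, hn⟩ := hnoeth F fun n => ringIdl_homogeneous _
  have h1 := hn (n + 1) (Nat.le_succ n)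
  refine ringIdl_ne (hmono n) (hT _ (hfT (n+1))) ?_ h1.symm
  intro hEq
  exact hstepNe _ (hfT n) (by rw [← hfs n]; exact hEq.symm)

end DivIdl

-- ===== chunk 7: maximal divisorial primes and unique factorization =====

namespace DivIdl

/-- Maximal proper integral divisorial ideals. -/
def IsMaxd {hint : KIntegralRing 𝒜} (p : DivIdl hint) : Prop :=
  p.carrier ⊆ Mset hint ∧ p ≠ 1 ∧
    ∀ B : DivIdl hint, B.carrier ⊆ Mset hint → B ≠ 1 → p ≤ B → B = p

lemma exists_le_maxd (hnoeth : KNoetherian 𝒜) {A : DivIdl hint}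
    (hAint : A.carrier ⊆ Mset hint) (hA1 : A ≠ 1) :
    ∃ p : DivIdl hint, IsMaxd p ∧ A ≤ p := by
  obtain ⟨p, ⟨hpint, hp1, hpA⟩, hpmax⟩ :=
    exists_maximal hnoeth {B | B.carrier ⊆ Mset hint ∧ B ≠ 1 ∧ A ≤ B}
      (fun B hB => hB.1) ⟨A, hAint, hA1, le_refl A⟩
  refine ⟨p, ⟨hpint, hp1, fun B hBint hB1 hpB => ?_⟩, hpA⟩
  exact hpmax B ⟨hBint, hB1, hpA.trans hpB⟩ hpB

lemma maxd_prime {p : DivIdl hint} (hp : IsMaxd p) {x y : ↥(homUnits hint)}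
    (hx : x ∈ Mset hint) (hy : y ∈ Mset hint) (hxy : x * y ∈ p.carrier) :
    x ∈ p.carrier ∨ y ∈ p.carrier := by
  by_cases hxp : x ∈ p.carrier
  · exact Or.inl hxp
  right
  set X : Set ↥(homUnits hint) := p.carrier ∪ {x} * Mset hint with hX
  have hXM : X ⊆ Mset hint := by
    rintro z hz
    rcases hz with hz | ⟨a, ha, m, hm, rfl⟩
    · exact hp.1 hz
    · have ha' : a = x := ha
      rw [ha']
      exact mul_mem_Mset hx hm
  have hJ : ∀ z ∈ vcl hint X, z ∈ Mset hint := by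
    intro z hz
    have := bound_vcl (c := 1) (fun s hs => by rw [one_mul]; exact hXM hs) z hz
    rwa [one_mul] at this
  let J : DivIdl hint := ⟨vcl hint X, ⟨x, subset_vcl X (Or.inr ⟨x, rfl, 1, one_mem_Mset, mul_one x⟩)⟩,
    ⟨1, fun s hs => by rw [one_mul]; exact hJ s hs⟩, vcl_idem X⟩
  have hxJ : x ∈ J.carrier := subset_vcl X (Or.inr ⟨x, rfl, 1, one_mem_Mset, mul_one x⟩)
  have hpJ : p ≤ J := fun z hz => subset_vcl X (Or.inl hz)
  have hJp : J ≠ p := fun h => hxp (h ▸ hxJ)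
  have hJ1 : J = 1 := by
    by_contra hJ1
    exact hJp (hp.2.2 J (fun z hz => hJ z hz) hJ1 hpJ)
  -- y * (vcl X) ⊆ p.carrier
  have hyX : X * {y} ⊆ p.carrier := by
    rintro - ⟨z, hz, b, hb, rfl⟩
    have hb' : b = y := hb
    show z * b ∈ p.carrier
    rw [hb']
    rcases hz with hz | ⟨a, ha, m, hm, rfl⟩
    · rw [mul_comm]
      exact p.stable hy hz
    · have ha' : a = x := ha
      rw [ha']
      have heq : x * m * y = m * (x * y) := by ac_rfl
      rw [heq]
      exact p.stable hm hxy
  have hyvcl : (vcl hint X) * {y} ⊆ p.carrier := by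
    have h1 : (vcl hint X) * {y} ⊆ vcl hint (X * {y}) := vcl_mul_subset _ _
    have h2 : vcl hint (X * {y}) ⊆ vcl hint p.carrier := vcl_mono hyX
    rw [p.divis'] at h2
    exact h1.trans h2
  have h1J : (1 : ↥(homUnits hint)) ∈ J.carrier := by
    rw [hJ1]; exact one_mem_Mset
  have := hyvcl (Set.mul_mem_mul h1J (rfl : y ∈ ({y} : Set _)))
  rwa [one_mul] at this

lemma prod_int {l : Multiset (DivIdl hint)} (hl : ∀ q ∈ l, q.carrier ⊆ Mset hint) :
    l.prod.carrier ⊆ Mset hint := by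
  induction l using Multiset.induction_on with
  | empty => rw [Multiset.prod_zero]; exact subset_rfl
  | cons q l ih =>
    rw [Multiset.prod_cons]
    have h2 : (q * l.prod).carrier ⊆ q.carrier :=
      carrier_subset_of_le_one (ih fun r hr => hl r (Multiset.mem_cons_of_mem hr))
    exact h2.trans (hl q (Multiset.mem_cons_self q l))

lemma prod_subset_of_mem {l : Multiset (DivIdl hint)} (hl : ∀ q ∈ l, q.carrier ⊆ Mset hint)
    {q : DivIdl hint} (hq : q ∈ l) : l.prod.carrier ⊆ q.carrier := by
  classical
  rw [← Multiset.cons_erase hq, Multiset.prod_cons]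
  have hint' : (l.erase q).prod.carrier ⊆ Mset hint :=
    prod_int fun r hr => hl r (Multiset.mem_of_mem_erase hr)
  exact carrier_subset_of_le_one hint'

lemma prime_dvd_prod {p : DivIdl hint} (hp : IsMaxd p) {l : Multiset (DivIdl hint)}
    (hl : ∀ q ∈ l, IsMaxd q) (h : l.prod.carrier ⊆ p.carrier) : ∃ q ∈ l, q = p := by
  induction l using Multiset.induction_on with
  | empty =>
    exfalso
    rw [Multiset.prod_zero] at h
    have h1 : p.carrier = Mset hint := le_antisymm hp.1 h
    exact hp.2.1 (DivIdl.ext h1)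
  | cons q l ih =>
    rw [Multiset.prod_cons] at h
    by_cases hqp : q.carrier ⊆ p.carrier
    · refine ⟨q, Multiset.mem_cons_self q l, ?_⟩
      have hq := hl q (Multiset.mem_cons_self q l)
      exact (hq.2.2 p hp.1 hp.2.1 hqp).symm
    · have hlint : ∀ r ∈ l, r.carrier ⊆ Mset hint := fun r hr =>
        (hl r (Multiset.mem_cons_of_mem hr)).1
      obtain ⟨x, hxq, hxp⟩ := Set.not_subset.mp hqp
      have hsub : l.prod.carrier ⊆ p.carrier := by
        intro z hz
        have hzM : z ∈ Mset hint := prod_int hlint hz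
        have hxM : x ∈ Mset hint := (hl q (Multiset.mem_cons_self q l)).1 hxq
        have hxz : x * z ∈ (q * l.prod).carrier := by
          rw [mul_carrier]
          exact subset_vcl _ (Set.mul_mem_mul hxq hz)
        rcases maxd_prime hp hxM hzM (h hxz) with h1 | h1
        · exact absurd h1 hxp
        · exact h1
      obtain ⟨r, hr1, hr2⟩ := ih (fun r hr => hl r (Multiset.mem_cons_of_mem hr)) hsub
      exact ⟨r, Multiset.mem_cons_of_mem hr1, hr2⟩

theorem exists_fact (hcic : CIC hint) (hnoeth : KNoetherian 𝒜) (A : DivIdl hint)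
    (hAint : A.carrier ⊆ Mset hint) :
    ∃ l : Multiset (DivIdl hint), (∀ q ∈ l, IsMaxd q) ∧ A = l.prod := by
  by_contra hcon
  have hTne : {B : DivIdl hint | B.carrier ⊆ Mset hint ∧
      ¬∃ l : Multiset (DivIdl hint), (∀ q ∈ l, IsMaxd q) ∧ B = l.prod}.Nonempty :=
    ⟨A, hAint, hcon⟩
  obtain ⟨B, ⟨hBint, hBnf⟩, hBmax⟩ :=
    exists_maximal hnoeth _ (fun C hC => hC.1) hTne
  have hB1 : B ≠ 1 := by
    rintro rfl
    exact hBnf ⟨0, by simp, by simp⟩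
  obtain ⟨p, hp, hBp⟩ := exists_le_maxd hnoeth hBint hB1
  set B' := B * dinv p with hB'
  have hB'int : B'.carrier ⊆ Mset hint := by
    rw [hB', mul_carrier]
    have h1 : B.carrier * (dinv p).carrier ⊆ Mset hint := by
      rintro - ⟨a, ha, h, hh, rfl⟩
      show a * h ∈ Mset hint
      rw [mul_comm]
      exact hh a (hBp ha)
    calc vcl hint (B.carrier * (dinv p).carrier) ⊆ vcl hint (Mset hint) := vcl_mono h1
      _ = Mset hint := vcl_Mset
  have hBfac : B = B' * p := by
    rw [hB', mul_assoc, mul_comm (dinv p) p, mul_dinv hcic p, mul_one]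
  have hBB' : B ≤ B' := by
    rw [hBfac]
    exact carrier_subset_of_le_one hp.1
  have hBne : B' ≠ B := by
    intro h
    rw [h] at hBfac
    have : B * 1 = B * p := by rw [mul_one]; exact hBfac
    exact hp.2.1 (mul_cancel hcic this).symm
  have hB'notin : ∃ l : Multiset (DivIdl hint), (∀ q ∈ l, IsMaxd q) ∧ B' = l.prod := by
    by_contra hB'nf
    exact hBne (hBmax B' ⟨hB'int, hB'nf⟩ hBB')
  obtain ⟨l, hl, hleq⟩ := hB'notin
  exact hBnf ⟨p ::ₘ l, by
    intro q hq
    rcases Multiset.mem_cons.mp hq with rfl | hq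
    · exact hp
    · exact hl q hq, by rw [Multiset.prod_cons, hBfac, hleq, mul_comm]⟩

theorem fact_unique (hcic : CIC hint) : ∀ (l1 l2 : Multiset (DivIdl hint)),
    (∀ q ∈ l1, IsMaxd q) → (∀ q ∈ l2, IsMaxd q) → l1.prod = l2.prod → l1 = l2 := by
  intro l1
  induction l1 using Multiset.induction_on with
  | empty =>
    intro l2 _ hl2 hprod
    rcases Multiset.empty_or_exists_mem l2 with rfl | ⟨q, hq⟩
    · rfl
    exfalso
    have h1 : l2.prod.carrier ⊆ q.carrier :=
      prod_subset_of_mem (fun r hr => (hl2 r hr).1) hq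
    rw [← hprod] at h1
    rw [Multiset.prod_zero] at h1
    have : q.carrier = Mset hint := le_antisymm (hl2 q hq).1 h1
    exact (hl2 q hq).2.1 (DivIdl.ext this)
  | cons p l1 ih =>
    intro l2 hl1 hl2 hprod
    classical
    have hp : IsMaxd p := hl1 p (Multiset.mem_cons_self p l1)
    rw [Multiset.prod_cons] at hprod
    have hsub : l2.prod.carrier ⊆ p.carrier := by
      rw [← hprod]
      exact carrier_subset_of_le_one (prod_int fun r hr =>
        (hl1 r (Multiset.mem_cons_of_mem hr)).1)
    obtain ⟨q, hq, rfl⟩ := prime_dvd_prod hp (fun r hr => hl2 r hr) hsub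
    rw [← Multiset.cons_erase hq, Multiset.prod_cons] at hprod
    have heq : l1.prod = (l2.erase q).prod := mul_cancel hcic hprod
    rw [← Multiset.cons_erase hq]
    congr 1
    exact ih (l2.erase q) (fun r hr => hl1 r (Multiset.mem_cons_of_mem hr))
      (fun r hr => hl2 r (Multiset.mem_of_mem_erase hr)) heq

end DivIdl

-- ===== chunk 8a: principal ideals, denominators, counts =====

open scoped Classical

namespace DivIdl

/-- The principal divisorial ideal of `g`. -/
def princ (g : ↥(homUnits hint)) : DivIdl hint where
  carrier := vcl hint ({g} * Mset hint)
  nonempty' := ⟨g, subset_vcl _ ⟨g, rfl, 1, one_mem_Mset, mul_one g⟩⟩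
  bounded' := by
    refine ⟨g⁻¹, bound_vcl ?_⟩
    rintro - ⟨a, ha, m, hm, rfl⟩
    have ha' : a = g := ha
    rw [ha']
    have : g⁻¹ * (g * m) = m := by group
    rwa [this]
  divis' := vcl_idem _

lemma mem_princ_self (g : ↥(homUnits hint)) : g ∈ (princ g).carrier :=
  subset_vcl _ ⟨g, rfl, 1, one_mem_Mset, mul_one g⟩

lemma princ_mul (g h : ↥(homUnits hint)) : princ (g * h) = princ g * princ h := by
  apply DivIdl.ext
  show vcl hint ({g * h} * Mset hint)
    = vcl hint ((princ g).carrier * (princ h).carrier)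
  have h1 : vcl hint ((princ g).carrier * (princ h).carrier)
      = vcl hint (({g} * Mset hint) * ({h} * Mset hint)) := by
    show vcl hint (vcl hint ({g} * Mset hint) * vcl hint ({h} * Mset hint)) = _
    rw [vcl_mul_vcl]
  rw [h1]
  have h2 : {g * h} * Mset hint = ({g} * Mset hint) * ({h} * Mset hint) := by
    apply le_antisymm
    · rintro - ⟨a, ha, m, hm, rfl⟩
      have ha' : a = g * h := ha
      rw [ha']
      refine ⟨g * m, ⟨g, rfl, m, hm, rfl⟩, h * 1, ⟨h, rfl, 1, one_mem_Mset, rfl⟩, ?_⟩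
      show g * m * (h * 1) = g * h * m
      rw [mul_one]
      ac_rfl
    · rintro - ⟨_, ⟨a, ha, m, hm, rfl⟩, _, ⟨b, hb, m', hm', rfl⟩, rfl⟩
      have ha' : a = g := ha
      have hb' : b = h := hb
      rw [ha', hb']
      refine ⟨g * h, rfl, m * m', mul_mem_Mset hm hm', ?_⟩
      show g * h * (m * m') = g * m * (h * m')
      ac_rfl
  rw [h2]

lemma princ_one : princ (1 : ↥(homUnits hint)) = 1 := by
  apply DivIdl.ext
  show vcl hint ({1} * Mset hint) = Mset hint
  rw [Set.singleton_mul]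
  have : (fun x => (1 : ↥(homUnits hint)) * x) '' Mset hint = Mset hint := by
    simp [Set.image_id']
  rw [this, vcl_Mset]

lemma princ_le_of_mem {g : ↥(homUnits hint)} {A : DivIdl hint} (hg : g ∈ A.carrier) :
    princ g ≤ A := by
  show (princ g).carrier ⊆ A.carrier
  have h1 : {g} * Mset hint ⊆ A.carrier := by
    rintro - ⟨a, ha, m, hm, rfl⟩
    have ha' : a = g := ha
    rw [ha']
    show g * m ∈ A.carrier
    rw [mul_comm]
    exact A.stable hm hg
  calc vcl hint ({g} * Mset hint) ⊆ vcl hint A.carrier := vcl_mono h1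
    _ = A.carrier := A.divis'

lemma princ_int_of_mem {g : ↥(homUnits hint)} (hg : g ∈ Mset hint) :
    (princ g).carrier ⊆ Mset hint := by
  have h1 : {g} * Mset hint ⊆ Mset hint := by
    rintro - ⟨a, ha, m, hm, rfl⟩
    have ha' : a = g := ha
    rw [ha']
    exact mul_mem_Mset hg hm
  calc vcl hint ({g} * Mset hint) ⊆ vcl hint (Mset hint) := vcl_mono h1
    _ = Mset hint := vcl_Mset

lemma mem_of_princ_le {g : ↥(homUnits hint)} {A : DivIdl hint} (h : princ g ≤ A) :
    g ∈ A.carrier := h (mem_princ_self g)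

/-- Every homogeneous unit is a quotient of two elements of `M`. -/
lemma exists_den (g : ↥(homUnits hint)) :
    ∃ m1 m2 : ↥(homUnits hint), m1 ∈ Mset hint ∧ m2 ∈ Mset hint ∧ g = m1 * m2⁻¹ := by
  obtain ⟨r, s, hs, hr, hs', hval⟩ := gval_homFrac g
  have hg0 : gval g ≠ 0 := gval_ne_zero g
  have hr0 : r ≠ 0 := by
    rintro rfl
    exact hg0 (by rw [hval, (mk_eq_zero_iff hint 0 _).2 rfl])
  have hs0 : s ≠ 0 := ((mem_homNonzeroSub hint).1 hs).2
  have hrQ : algebraMap R (QPlus 𝒜) r ≠ 0 :=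
    fun h => hr0 (algebraMap_injective hint (by rw [h, map_zero]))
  have hsQ : algebraMap R (QPlus 𝒜) s ≠ 0 :=
    fun h => hs0 (algebraMap_injective hint (by rw [h, map_zero]))
  set m1 := toGam hint (homFrac_algebraMap hr) hrQ with hm1
  set m2 := toGam hint (homFrac_algebraMap hs') hsQ with hm2
  refine ⟨m1, m2, ⟨r, (gval_toGam _ _).symm⟩, ⟨s, (gval_toGam _ _).symm⟩, ?_⟩
  have key : g * m2 = m1 := by
    apply gval_injective
    rw [← gval_mul]
    rw [gval_toGam, gval_toGam, hval, algebraMap_mk']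
    rw [Localization.mk_mul, mul_one]
    have h2 : Localization.mk (r * s) (⟨s, hs⟩ : homNonzeroSub 𝒜)
        = Localization.mk r 1 * Localization.mk s ⟨s, hs⟩ := by
      rw [Localization.mk_mul, one_mul]
    rw [h2, show Localization.mk s (⟨s, hs⟩ : homNonzeroSub 𝒜) = 1 from
      Localization.mk_self (⟨s, hs⟩ : homNonzeroSub 𝒜), mul_one, algebraMap_mk']
  rw [← key]
  rw [mul_inv_cancel_right]

/-- Every divisorial ideal can be scaled into an integral one by a principal ideal. -/
lemma exists_scale (A : DivIdl hint) :
    ∃ m : ↥(homUnits hint), m ∈ Mset hint ∧ (A * princ m).carrier ⊆ Mset hint := by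
  obtain ⟨c, hc⟩ := A.bounded'
  obtain ⟨m1, m2, hm1, hm2, hceq⟩ := exists_den c
  refine ⟨m1, hm1, ?_⟩
  have hstep : ∀ a ∈ A.carrier, m1 * a ∈ Mset hint := by
    intro a ha
    have h1 : m1 * a = m2 * (c * a) := by
      rw [hceq, mul_comm m1 m2⁻¹, mul_assoc m2⁻¹ m1 a, mul_inv_cancel_left]
    rw [h1]
    exact mul_mem_Mset hm2 (hc a ha)
  rw [mul_carrier]
  have h1 : A.carrier * (princ m1).carrier ⊆ Mset hint := by
    have h2 : A.carrier * (princ m1).carrier ⊆ vcl hint (A.carrier * ({m1} * Mset hint)) := by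
      rw [show A.carrier * (princ m1).carrier = (princ m1).carrier * A.carrier from
        mul_comm _ _, show A.carrier * ({m1} * Mset hint)
          = ({m1} * Mset hint) * A.carrier from mul_comm _ _]
      exact vcl_mul_subset _ _
    refine h2.trans ?_
    have h3 : A.carrier * ({m1} * Mset hint) ⊆ Mset hint := by
      rintro - ⟨a, ha, _, ⟨b, hb, m, hm, rfl⟩, rfl⟩
      have hb' : b = m1 := hb
      rw [hb']
      show a * (m1 * m) ∈ Mset hint
      have heq : a * (m1 * m) = (m1 * a) * m := by ac_rfl
      rw [heq]
      exact mul_mem_Mset (hstep a ha) hm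
    calc vcl hint (A.carrier * ({m1} * Mset hint)) ⊆ vcl hint (Mset hint) := vcl_mono h3
      _ = Mset hint := vcl_Mset
  calc vcl hint (A.carrier * (princ m1).carrier) ⊆ vcl hint (Mset hint) := vcl_mono h1
    _ = Mset hint := vcl_Mset

variable (hcic : CIC hint) (hnoeth : KNoetherian 𝒜)

/-- The multiset of maximal divisorial primes of an integral ideal (junk otherwise). -/
noncomputable def fact (A : DivIdl hint) : Multiset (DivIdl hint) :=
  if h : A.carrier ⊆ Mset hint then (exists_fact hcic hnoeth A h).choose else 0

lemma fact_pos_eq {A : DivIdl hint} (hA : A.carrier ⊆ Mset hint) :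
    fact hcic hnoeth A = (exists_fact hcic hnoeth A hA).choose := by
  unfold fact
  rw [dif_pos hA]

lemma fact_maxd {A : DivIdl hint} (hA : A.carrier ⊆ Mset hint) :
    ∀ q ∈ fact hcic hnoeth A, IsMaxd q := by
  rw [fact_pos_eq hcic hnoeth hA]
  exact (exists_fact hcic hnoeth A hA).choose_spec.1

lemma fact_prod {A : DivIdl hint} (hA : A.carrier ⊆ Mset hint) :
    (fact hcic hnoeth A).prod = A := by
  rw [fact_pos_eq hcic hnoeth hA]
  exact (exists_fact hcic hnoeth A hA).choose_spec.2.symm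

lemma fact_eq {A : DivIdl hint} (hA : A.carrier ⊆ Mset hint)
    {l : Multiset (DivIdl hint)} (hl : ∀ q ∈ l, IsMaxd q) (hprod : l.prod = A) :
    fact hcic hnoeth A = l :=
  fact_unique hcic _ _ (fact_maxd hcic hnoeth hA) hl (by rw [fact_prod hcic hnoeth hA, hprod])

/-- Multiplicity of a maximal divisorial prime in an integral ideal. -/
noncomputable def cnt (p : DivIdl hint) (A : DivIdl hint) : ℕ :=
  (fact hcic hnoeth A).count p

lemma mul_int {A B : DivIdl hint} (hA : A.carrier ⊆ Mset hint) (hB : B.carrier ⊆ Mset hint) :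
    (A * B).carrier ⊆ Mset hint :=
  (carrier_subset_of_le_one hB).trans hA

lemma cnt_mul (p : DivIdl hint) {A B : DivIdl hint}
    (hA : A.carrier ⊆ Mset hint) (hB : B.carrier ⊆ Mset hint) :
    cnt hcic hnoeth p (A * B) = cnt hcic hnoeth p A + cnt hcic hnoeth p B := by
  classical
  have hfact : fact hcic hnoeth (A * B) = fact hcic hnoeth A + fact hcic hnoeth B := by
    refine fact_eq hcic hnoeth (mul_int hA hB) ?_ ?_
    · intro q hq
      rcases Multiset.mem_add.mp hq with h | h
      · exact fact_maxd hcic hnoeth hA q h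
      · exact fact_maxd hcic hnoeth hB q h
    · rw [Multiset.prod_add, fact_prod hcic hnoeth hA, fact_prod hcic hnoeth hB]
  unfold cnt
  rw [hfact]
  simp [Multiset.count_add]

lemma cnt_one (p : DivIdl hint) : cnt hcic hnoeth p (1 : DivIdl hint) = 0 := by
  classical
  have h1 : fact hcic hnoeth (1 : DivIdl hint) = 0 :=
    fact_eq hcic hnoeth subset_rfl (by simp) (by simp)
  unfold cnt
  rw [h1]
  simp

lemma fact_of_maxd {p : DivIdl hint} (hp : IsMaxd p) : fact hcic hnoeth p = {p} :=
  fact_eq hcic hnoeth hp.1 (by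
    intro q hq
    rw [Multiset.mem_singleton.mp hq]
    exact hp) (by simp)

lemma cnt_maxd {p q : DivIdl hint} (hq : IsMaxd q) :
    cnt hcic hnoeth p q = if p = q then 1 else 0 := by
  classical
  unfold cnt
  rw [fact_of_maxd hcic hnoeth hq]
  simp [Multiset.count_singleton]

lemma cnt_le_of_subset {p A B : DivIdl hint} (hA : A.carrier ⊆ Mset hint)
    (hB : B.carrier ⊆ Mset hint) (hAB : A ≤ B) :
    cnt hcic hnoeth p B ≤ cnt hcic hnoeth p A := by
  have hC : (A * dinv B).carrier ⊆ Mset hint := by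
    rw [mul_carrier]
    have h1 : A.carrier * (dinv B).carrier ⊆ Mset hint := by
      rintro - ⟨a, ha, h, hh, rfl⟩
      show a * h ∈ Mset hint
      rw [mul_comm]
      exact hh a (hAB ha)
    calc vcl hint (A.carrier * (dinv B).carrier) ⊆ vcl hint (Mset hint) := vcl_mono h1
      _ = Mset hint := vcl_Mset
  have hA_eq : A = (A * dinv B) * B := by
    rw [mul_assoc, mul_comm (dinv B) B, mul_dinv hcic, mul_one]
  have := cnt_mul hcic hnoeth p hC hB
  rw [← hA_eq] at this
  omega

lemma subset_of_cnt_le {A B : DivIdl hint} (hA : A.carrier ⊆ Mset hint)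
    (hB : B.carrier ⊆ Mset hint)
    (h : ∀ p : DivIdl hint, cnt hcic hnoeth p B ≤ cnt hcic hnoeth p A) : A ≤ B := by
  classical
  have hle : fact hcic hnoeth B ≤ fact hcic hnoeth A := by
    rw [Multiset.le_iff_count]
    intro q
    exact h q
  have hA_eq : A = ((fact hcic hnoeth A - fact hcic hnoeth B) + fact hcic hnoeth B).prod := by
    rw [tsub_add_cancel_of_le hle, fact_prod hcic hnoeth hA]
  rw [Multiset.prod_add] at hA_eq
  rw [fact_prod hcic hnoeth hB] at hA_eq
  rw [hA_eq, mul_comm]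
  refine carrier_subset_of_le_one (prod_int ?_)
  intro q hq
  exact (fact_maxd hcic hnoeth hA q (Multiset.mem_of_le tsub_le_self hq)).1

end DivIdl

-- ===== chunk 8b: integer exponents =====

namespace DivIdl

variable (hcic : CIC hint) (hnoeth : KNoetherian 𝒜)

/-- A scaling element making `A` integral. -/
noncomputable def scaleEl (A : DivIdl hint) : ↥(homUnits hint) := (exists_scale A).choose

lemma scaleEl_mem (A : DivIdl hint) : scaleEl A ∈ Mset hint :=
  (exists_scale A).choose_spec.1

lemma scaleEl_int (A : DivIdl hint) : (A * princ (scaleEl A)).carrier ⊆ Mset hint :=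
  (exists_scale A).choose_spec.2

/-- The exponent of the maximal divisorial prime `p` in `A`. -/
noncomputable def expn (p A : DivIdl hint) : ℤ :=
  (cnt hcic hnoeth p (A * princ (scaleEl A)) : ℤ) - cnt hcic hnoeth p (princ (scaleEl A))

lemma expn_eq_of {m : ↥(homUnits hint)} (hm : m ∈ Mset hint) (p : DivIdl hint)
    {A : DivIdl hint} (hAm : (A * princ m).carrier ⊆ Mset hint) :
    expn hcic hnoeth p A
      = (cnt hcic hnoeth p (A * princ m) : ℤ) - cnt hcic hnoeth p (princ m) := by
  have h0m : (princ m).carrier ⊆ Mset hint := princ_int_of_mem hm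
  have h0s : (princ (scaleEl A)).carrier ⊆ Mset hint := princ_int_of_mem (scaleEl_mem A)
  have hAs : (A * princ (scaleEl A)).carrier ⊆ Mset hint := scaleEl_int A
  have hkey : (A * princ m) * princ (scaleEl A) = (A * princ (scaleEl A)) * princ m := by
    rw [mul_assoc, mul_assoc, mul_comm (princ m)]
  have h1 := cnt_mul hcic hnoeth p hAm h0s
  have h2 := cnt_mul hcic hnoeth p hAs h0m
  rw [hkey, h2] at h1
  rw [expn]
  omega

lemma expn_mul (p A B : DivIdl hint) :
    expn hcic hnoeth p (A * B) = expn hcic hnoeth p A + expn hcic hnoeth p B := by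
  set mA := scaleEl A
  set mB := scaleEl B
  have hm : mA * mB ∈ Mset hint := mul_mem_Mset (scaleEl_mem A) (scaleEl_mem B)
  have hprod : (A * B) * princ (mA * mB) = (A * princ mA) * (B * princ mB) := by
    rw [princ_mul]
    rw [mul_assoc, mul_assoc]
    congr 1
    rw [← mul_assoc, ← mul_assoc, mul_comm B (princ mA)]
  have hABm : ((A * B) * princ (mA * mB)).carrier ⊆ Mset hint := by
    rw [hprod]
    exact mul_int (scaleEl_int A) (scaleEl_int B)
  rw [expn_eq_of hcic hnoeth hm p hABm,
    expn_eq_of hcic hnoeth (scaleEl_mem A) p (scaleEl_int A),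
    expn_eq_of hcic hnoeth (scaleEl_mem B) p (scaleEl_int B),
    hprod, princ_mul,
    cnt_mul hcic hnoeth p (scaleEl_int A) (scaleEl_int B),
    cnt_mul hcic hnoeth p (princ_int_of_mem (scaleEl_mem A))
      (princ_int_of_mem (scaleEl_mem B))]
  push_cast
  ring

lemma expn_int (p : DivIdl hint) {A : DivIdl hint} (hA : A.carrier ⊆ Mset hint) :
    expn hcic hnoeth p A = cnt hcic hnoeth p A := by
  have h1 : (A * princ 1).carrier ⊆ Mset hint := by
    rw [princ_one, mul_one]
    exact hA
  rw [expn_eq_of hcic hnoeth one_mem_Mset p h1, princ_one, mul_one, cnt_one]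
  simp

lemma expn_one (p : DivIdl hint) : expn hcic hnoeth p (1 : DivIdl hint) = 0 := by
  rw [expn_int hcic hnoeth p (subset_rfl), cnt_one]
  simp

lemma expn_dinv (p A : DivIdl hint) :
    expn hcic hnoeth p (dinv A) = - expn hcic hnoeth p A := by
  have h1 := expn_mul hcic hnoeth p A (dinv A)
  rw [mul_dinv hcic, expn_one] at h1
  omega

lemma cnt_not_maxd {p A : DivIdl hint} (hA : A.carrier ⊆ Mset hint) (hp : ¬IsMaxd p) :
    cnt hcic hnoeth p A = 0 := by
  unfold cnt
  exact Multiset.count_eq_zero_of_notMem fun hmem => hp (fact_maxd hcic hnoeth hA p hmem)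

lemma dinv_mul_int' {A B : DivIdl hint} (hAB : A ≤ B) :
    (A * dinv B).carrier ⊆ Mset hint := by
  rw [mul_carrier]
  have h1 : A.carrier * (dinv B).carrier ⊆ Mset hint := by
    rintro - ⟨a, ha, h, hh, rfl⟩
    show a * h ∈ Mset hint
    rw [mul_comm]
    exact hh a (hAB ha)
  calc vcl hint (A.carrier * (dinv B).carrier) ⊆ vcl hint (Mset hint) := vcl_mono h1
    _ = Mset hint := vcl_Mset

lemma eq_mul_dinv (hcic : CIC hint) (A B : DivIdl hint) : A = (A * dinv B) * B := by
  rw [mul_assoc, mul_comm (dinv B) B, mul_dinv hcic, mul_one]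

lemma int_of_expn_nonneg {C : DivIdl hint}
    (h : ∀ p : DivIdl hint, IsMaxd p → 0 ≤ expn hcic hnoeth p C) :
    C.carrier ⊆ Mset hint := by
  classical
  set m := scaleEl C
  set D := C * princ m with hD
  have hDint : D.carrier ⊆ Mset hint := scaleEl_int C
  have hmint : (princ m).carrier ⊆ Mset hint := princ_int_of_mem (scaleEl_mem C)
  have hle : fact hcic hnoeth (princ m) ≤ fact hcic hnoeth D := by
    rw [Multiset.le_iff_count]
    intro q
    by_cases hq : IsMaxd q
    · have := h q hq
      rw [expn] at this
      change (0:ℤ) ≤ (cnt hcic hnoeth q D : ℤ) - cnt hcic hnoeth q (princ m) at this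
      have : cnt hcic hnoeth q (princ m) ≤ cnt hcic hnoeth q D := by omega
      exact this
    · have h0 : cnt hcic hnoeth q (princ m) = 0 := cnt_not_maxd hcic hnoeth hmint hq
      unfold cnt at h0
      rw [h0]
      exact Nat.zero_le _
  set E := (fact hcic hnoeth D - fact hcic hnoeth (princ m)).prod with hE
  have hEint : E.carrier ⊆ Mset hint := prod_int fun q hq =>
    (fact_maxd hcic hnoeth hDint q (Multiset.mem_of_le tsub_le_self hq)).1
  have hDE : D = E * princ m := by
    have h1 : D = ((fact hcic hnoeth D - fact hcic hnoeth (princ m))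
        + fact hcic hnoeth (princ m)).prod := by
      rw [tsub_add_cancel_of_le hle, fact_prod hcic hnoeth hDint]
    rw [Multiset.prod_add] at h1
    rw [fact_prod hcic hnoeth hmint] at h1
    exact h1
  have hCE : C = E := by
    apply mul_cancel hcic (A := princ m)
    rw [mul_comm (princ m) C, mul_comm (princ m) E]
    rw [← hD, ← hDE]
  rw [hCE]
  exact hEint

lemma le_iff_expn {A B : DivIdl hint} :
    A ≤ B ↔ ∀ p : DivIdl hint, IsMaxd p →
      expn hcic hnoeth p B ≤ expn hcic hnoeth p A := by
  constructor
  · intro hAB p hp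
    have hCint := dinv_mul_int' (A := A) (B := B) hAB
    have h1 : expn hcic hnoeth p A
        = expn hcic hnoeth p (A * dinv B) + expn hcic hnoeth p B := by
      conv_lhs => rw [eq_mul_dinv hcic A B]
      rw [expn_mul]
    rw [expn_int hcic hnoeth p hCint] at h1
    omega
  · intro h
    have hCnn : ∀ p : DivIdl hint, IsMaxd p → 0 ≤ expn hcic hnoeth p (A * dinv B) := by
      intro p hp
      rw [expn_mul, expn_dinv]
      have := h p hp
      omega
    have hCint := int_of_expn_nonneg hcic hnoeth hCnn
    have hA_eq : A = (A * dinv B) * B := eq_mul_dinv hcic A B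
    rw [hA_eq, mul_comm]
    exact carrier_subset_of_le_one hCint

lemma one_le_cnt {p I : DivIdl hint} (hp : IsMaxd p) (hI : I.carrier ⊆ Mset hint)
    (hIp : I ≤ p) : 1 ≤ cnt hcic hnoeth p I := by
  classical
  obtain ⟨q, hq, rfl⟩ := prime_dvd_prod hp (fact_maxd hcic hnoeth hI) (by
    rw [fact_prod hcic hnoeth hI]
    exact hIp)
  unfold cnt
  exact Multiset.one_le_count_iff_mem.mpr hq

lemma exists_expn_eq_one {p : DivIdl hint} (hp : IsMaxd p) :
    ∃ a : ↥(homUnits hint), a ∈ Mset hint ∧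
      expn hcic hnoeth p (princ a) = 1 := by
  classical
  have hppint : (p * p).carrier ⊆ p.carrier := carrier_subset_of_le_one hp.1
  have hppMset : (p * p).carrier ⊆ Mset hint := hppint.trans hp.1
  have hne : ∃ a ∈ p.carrier, a ∉ (p * p).carrier := by
    by_contra hcon
    push_neg at hcon
    have : p * p = p := DivIdl.ext (le_antisymm hppint hcon)
    have h1 : p * p = p * 1 := by rw [this, mul_one]
    exact hp.2.1 (mul_cancel hcic h1)
  obtain ⟨a, hap, happ⟩ := hne
  have haM : a ∈ Mset hint := hp.1 hap
  have haint : (princ a).carrier ⊆ Mset hint := princ_int_of_mem haM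
  have hle : princ a ≤ p := princ_le_of_mem hap
  have h1 : 1 ≤ cnt hcic hnoeth p (princ a) := one_le_cnt hcic hnoeth hp haint hle
  have h2 : cnt hcic hnoeth p (princ a) < 2 := by
    by_contra hcon
    push_neg at hcon
    have hle2 : (p ::ₘ {p}) ≤ fact hcic hnoeth (princ a) := by
      rw [Multiset.le_iff_count]
      intro q
      by_cases hq : q = p
      · subst hq
        simpa [cnt] using hcon
      · simp [Multiset.count_cons, Multiset.count_singleton, hq]
    set E := (fact hcic hnoeth (princ a) - (p ::ₘ {p})).prod with hEdef
    have hEint : E.carrier ⊆ Mset hint := prod_int fun q hq =>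
      (fact_maxd hcic hnoeth haint q (Multiset.mem_of_le tsub_le_self hq)).1
    have hfeq : princ a = E * (p * p) := by
      have h3 : princ a = ((fact hcic hnoeth (princ a) - (p ::ₘ {p}))
          + (p ::ₘ {p})).prod := by
        rw [tsub_add_cancel_of_le hle2, fact_prod hcic hnoeth haint]
      rw [Multiset.prod_add] at h3
      have h4 : (p ::ₘ ({p} : Multiset (DivIdl hint))).prod = p * p := by
        simp
      rw [h4] at h3
      exact h3
    apply happ
    have h5 : (princ a).carrier ⊆ (p * p).carrier := by
      rw [hfeq, mul_comm]
      exact carrier_subset_of_le_one hEint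
    exact h5 (mem_princ_self a)
  refine ⟨a, haM, ?_⟩
  rw [expn_int hcic hnoeth p haint]
  omega

lemma expn_princ_pow (p : DivIdl hint) (γ : ↥(homUnits hint)) (k : ℕ) :
    expn hcic hnoeth p (princ (γ ^ k)) = k * expn hcic hnoeth p (princ γ) := by
  induction k with
  | zero =>
    simp [princ_one, expn_one hcic hnoeth]
  | succ n ih =>
    rw [pow_succ, princ_mul, expn_mul, ih]
    push_cast
    ring

lemma expn_princ_inv (p : DivIdl hint) (γ : ↥(homUnits hint)) :
    expn hcic hnoeth p (princ γ⁻¹) = - expn hcic hnoeth p (princ γ) := by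
  have h1 : princ γ * princ γ⁻¹ = 1 := by
    rw [← princ_mul, mul_inv_cancel, princ_one]
  have h2 := expn_mul hcic hnoeth p (princ γ) (princ γ⁻¹)
  rw [h1, expn_one] at h2
  omega

lemma expn_princ_surj {p : DivIdl hint} (hp : IsMaxd p) (n : ℤ) :
    ∃ γ : ↥(homUnits hint), expn hcic hnoeth p (princ γ) = n := by
  obtain ⟨a, _, ha⟩ := exists_expn_eq_one hcic hnoeth hp
  rcases le_or_gt 0 n with hn | hn
  · refine ⟨a ^ n.toNat, ?_⟩
    rw [expn_princ_pow, ha, mul_one, Int.toNat_of_nonneg hn]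
  · refine ⟨(a⁻¹) ^ (-n).toNat, ?_⟩
    rw [expn_princ_pow, expn_princ_inv, ha]
    have : ((-n).toNat : ℤ) = -n := Int.toNat_of_nonneg (by omega)
    rw [this]
    ring

lemma mem_Mset_iff_expn (γ : ↥(homUnits hint)) :
    γ ∈ Mset hint ↔ ∀ p : DivIdl hint, IsMaxd p →
      0 ≤ expn hcic hnoeth p (princ γ) := by
  constructor
  · intro hγ p hp
    rw [expn_int hcic hnoeth p (princ_int_of_mem hγ)]
    exact Int.ofNat_nonneg _
  · intro h
    have h1 : princ γ ≤ (1 : DivIdl hint) := by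
      rw [le_iff_expn hcic hnoeth]
      intro p hp
      rw [expn_one]
      exact h p hp
    exact h1 (mem_princ_self γ)

lemma expn_princ_finite (γ : ↥(homUnits hint)) :
    {p : DivIdl hint | IsMaxd p ∧ expn hcic hnoeth p (princ γ) ≠ 0}.Finite := by
  classical
  apply Set.Finite.subset
    ((fact hcic hnoeth (princ γ * princ (scaleEl (princ γ)))).toFinset.finite_toSet.union
      (fact hcic hnoeth (princ (scaleEl (princ γ)))).toFinset.finite_toSet)
  intro p hp
  obtain ⟨hpm, hpne⟩ := hp
  rw [expn] at hpne
  by_cases h1 : cnt hcic hnoeth p (princ γ * princ (scaleEl (princ γ))) = 0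
  · have h2 : cnt hcic hnoeth p (princ (scaleEl (princ γ))) ≠ 0 := by omega
    right
    unfold cnt at h2
    simpa using Multiset.count_ne_zero.mp h2
  · left
    unfold cnt at h1
    simpa using Multiset.count_ne_zero.mp h1

end DivIdl

-- ===== chunk 9: the valuation inequality for sums =====

namespace DivIdl

variable (hcic : CIC hint) (hnoeth : KNoetherian 𝒜)

/-- Integer powers of divisorial ideals. -/
noncomputable def zp (A : DivIdl hint) (n : ℤ) : DivIdl hint :=
  if 0 ≤ n then A ^ n.toNat else dinv (A ^ (-n).toNat)

lemma expn_pow (p A : DivIdl hint) (k : ℕ) :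
    expn hcic hnoeth p (A ^ k) = k * expn hcic hnoeth p A := by
  induction k with
  | zero => simp [pow_zero, expn_one hcic hnoeth]
  | succ n ih =>
    rw [pow_succ, expn_mul, ih]
    push_cast
    ring

lemma expn_zp (p A : DivIdl hint) (n : ℤ) :
    expn hcic hnoeth p (zp A n) = n * expn hcic hnoeth p A := by
  rw [zp]
  split_ifs with hn
  · rw [expn_pow]
    rw [Int.toNat_of_nonneg hn]
  · rw [expn_dinv, expn_pow]
    have : ((-n).toNat : ℤ) = -n := Int.toNat_of_nonneg (by omega)
    rw [this]
    ring

lemma expn_maxd_delta {p q : DivIdl hint} (hq : IsMaxd q) :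
    expn hcic hnoeth p q = if p = q then 1 else 0 := by
  rw [expn_int hcic hnoeth p hq.1, cnt_maxd hcic hnoeth hq]
  split_ifs <;> simp

lemma expn_prod (p : DivIdl hint) (F : Finset (DivIdl hint)) (f : DivIdl hint → DivIdl hint) :
    expn hcic hnoeth p (∏ q ∈ F, f q) = ∑ q ∈ F, expn hcic hnoeth p (f q) := by
  classical
  induction F using Finset.induction_on with
  | empty => simp [expn_one hcic hnoeth]
  | insert _ _ hq ih =>
    rw [Finset.prod_insert hq, Finset.sum_insert hq, expn_mul, ih]

lemma expn_princ_add {γ1 γ2 γ3 : ↥(homUnits hint)}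
    (h : gval γ1 + gval γ2 = gval γ3) {p : DivIdl hint} (hp : IsMaxd p) :
    min (expn hcic hnoeth p (princ γ1)) (expn hcic hnoeth p (princ γ2))
      ≤ expn hcic hnoeth p (princ γ3) := by
  classical
  set e1 : DivIdl hint → ℤ := fun q => expn hcic hnoeth q (princ γ1) with he1
  set e2 : DivIdl hint → ℤ := fun q => expn hcic hnoeth q (princ γ2) with he2
  have hfin : ({q : DivIdl hint | IsMaxd q ∧ e1 q ≠ 0}
      ∪ {q : DivIdl hint | IsMaxd q ∧ e2 q ≠ 0}).Finite :=
    (expn_princ_finite hcic hnoeth γ1).union (expn_princ_finite hcic hnoeth γ2)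
  set F : Finset (DivIdl hint) := hfin.toFinset with hF
  have hFmaxd : ∀ q ∈ F, IsMaxd q := by
    intro q hq
    rw [hF, Set.Finite.mem_toFinset] at hq
    rcases hq with h' | h' <;> exact h'.1
  set C : DivIdl hint := ∏ q ∈ F, zp q (min (e1 q) (e2 q)) with hC
  have hCexp : ∀ q : DivIdl hint, IsMaxd q →
      expn hcic hnoeth q C = min (e1 q) (e2 q) := by
    intro q hq
    rw [hC, expn_prod]
    have hterm : ∀ q' ∈ F, expn hcic hnoeth q (zp q' (min (e1 q') (e2 q')))
        = if q = q' then min (e1 q') (e2 q') else 0 := by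
      intro q' hq'
      rw [expn_zp, expn_maxd_delta hcic hnoeth (hFmaxd q' hq')]
      split_ifs <;> ring
    rw [Finset.sum_congr rfl hterm]
    rw [Finset.sum_ite_eq F q (fun q' => min (e1 q') (e2 q'))]
    by_cases hqF : q ∈ F
    · rw [if_pos hqF]
    · rw [if_neg hqF]
      have h1 : e1 q = 0 := by
        by_contra hne
        exact hqF (by rw [hF, Set.Finite.mem_toFinset]; exact Or.inl ⟨hq, hne⟩)
      have h2 : e2 q = 0 := by
        by_contra hne
        exact hqF (by rw [hF, Set.Finite.mem_toFinset]; exact Or.inr ⟨hq, hne⟩)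
      rw [h1, h2]
      simp
  have hle1 : princ γ1 ≤ C := by
    rw [le_iff_expn hcic hnoeth]
    intro q hq
    rw [hCexp q hq]
    exact min_le_left _ _
  have hle2 : princ γ2 ≤ C := by
    rw [le_iff_expn hcic hnoeth]
    intro q hq
    rw [hCexp q hq]
    exact min_le_right _ _
  have hm1 : γ1 ∈ C.carrier := hle1 (mem_princ_self γ1)
  have hm2 : γ2 ∈ C.carrier := hle2 (mem_princ_self γ2)
  have hm3 : γ3 ∈ C.carrier := by
    have h1 : γ1 ∈ vcl hint C.carrier := by rw [C.divis']; exact hm1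
    have h2 : γ2 ∈ vcl hint C.carrier := by rw [C.divis']; exact hm2
    have h3 : γ3 ∈ vcl hint C.carrier := add_mem_colA _ h h1 h2
    rw [C.divis'] at h3
    exact h3
  have hle3 : princ γ3 ≤ C := princ_le_of_mem hm3
  have := (le_iff_expn hcic hnoeth).mp hle3 p hp
  rw [hCexp p hp] at this
  exact this

end DivIdl

-- ===== chunk 10: normality gives complete integral closedness =====

lemma gval_pow (g : ↥(homUnits hint)) (k : ℕ) : gval (g ^ k) = gval g ^ k := by
  induction k with
  | zero => simp
  | succ n ih => rw [pow_succ, ← gval_mul, ih, pow_succ]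

lemma cic_of_normal (hnorm : KNormalRing 𝒜) (hnoeth : KNoetherian 𝒜) : CIC hint := by
  classical
  rintro g ⟨c, hc⟩
  set φ := algebraMap R (QPlus 𝒜) with hφ
  set s : ℕ → Set R := fun n =>
    {r : R | SetLike.IsHomogeneousElem 𝒜 r ∧ ∃ k ≤ n, φ r = gval (c * g ^ k)} with hs
  have hmono : ∀ n, s n ⊆ s (n + 1) := by
    rintro n r ⟨h1, k, hk, h2⟩
    exact ⟨h1, k, hk.trans (Nat.le_succ n), h2⟩
  let F : ℕ →o Ideal R :=
    ⟨fun n => Ideal.span (s n), monotone_nat_of_le_succ fun n => Ideal.span_mono (hmono n)⟩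
  obtain ⟨N, hN⟩ := hnoeth F fun n => Ideal.homogeneous_span _ _ fun r hr => hr.1
  obtain ⟨rrep, hrrep⟩ := hc (N + 1)
  have hrmem : rrep ∈ F (N + 1) :=
    Ideal.subset_span ⟨(exists_homog_preimage hint (gval_homFrac _) (gval_ne_zero _)
      hrrep).1, N + 1, le_refl _, hrrep⟩
  rw [hN (N + 1) (Nat.le_succ N)] at hrmem
  have key : ∀ x ∈ Ideal.span (s N), ∃ t : ℕ → R,
      φ x = ∑ k ∈ Finset.range (N + 1), φ (t k) * (gval c * gval g ^ k) := by
    intro x hx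
    induction hx using Submodule.span_induction with
    | mem y hy =>
      obtain ⟨hyh, k, hk, hyval⟩ := hy
      refine ⟨fun j => if j = k then 1 else 0, ?_⟩
      rw [Finset.sum_eq_single k]
      · show φ y = φ (if k = k then 1 else 0) * (gval c * gval g ^ k)
        rw [if_pos rfl, map_one, one_mul, hyval, ← gval_pow, gval_mul]
      · intro b _ hb
        show φ (if b = k then 1 else 0) * (gval c * gval g ^ b) = 0
        rw [if_neg hb, map_zero, zero_mul]
      · intro hk'
        exact absurd (Finset.mem_range.mpr (by omega)) hk'
    | zero => exact ⟨0, by simp⟩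
    | add x y _ _ ihx ihy =>
      obtain ⟨t1, ht1⟩ := ihx
      obtain ⟨t2, ht2⟩ := ihy
      refine ⟨fun k => t1 k + t2 k, ?_⟩
      rw [map_add, ht1, ht2, ← Finset.sum_add_distrib]
      refine Finset.sum_congr rfl fun k _ => ?_
      rw [map_add, add_mul]
    | smul r' x _ ihx =>
      obtain ⟨t, ht⟩ := ihx
      refine ⟨fun k => r' * t k, ?_⟩
      have hsm : r' • x = r' * x := rfl
      rw [hsm, map_mul, ht, Finset.mul_sum]
      refine Finset.sum_congr rfl fun k _ => ?_
      rw [map_mul, mul_assoc]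
  obtain ⟨t, ht⟩ := key rrep hrmem
  have hcomb : gval c * gval g ^ (N + 1)
      = gval c * ∑ k ∈ Finset.range (N + 1), φ (t k) * gval g ^ k := by
    rw [← gval_pow, gval_mul, ← hrrep, ht, Finset.mul_sum]
    refine Finset.sum_congr rfl fun k _ => ?_
    ring
  have hcancel : gval g ^ (N + 1) = ∑ k ∈ Finset.range (N + 1), φ (t k) * gval g ^ k := by
    have hu : IsUnit (gval c) := (c : (QPlus 𝒜)ˣ).isUnit
    exact hu.mul_left_cancel hcomb
  have hintg : IsIntegral R (gval g) := by
    refine ⟨Polynomial.X ^ (N + 1)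
      - ∑ k ∈ Finset.range (N + 1), Polynomial.C (t k) * Polynomial.X ^ k, ?_, ?_⟩
    · have hdeg : (∑ k ∈ Finset.range (N + 1),
          Polynomial.C (t k) * Polynomial.X ^ k).degree ≤ (N : WithBot ℕ) := by
        apply (Polynomial.degree_sum_le _ _).trans
        apply Finset.sup_le
        intro k hk
        refine (Polynomial.degree_C_mul_X_pow_le _ _).trans ?_
        exact_mod_cast Finset.mem_range_succ_iff.mp hk
      apply Polynomial.monic_X_pow_sub
      apply lt_of_le_of_lt hdeg
      exact_mod_cast Nat.lt_succ_self N
    · rw [Polynomial.eval₂_sub, Polynomial.eval₂_X_pow, Polynomial.eval₂_finset_sum]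
      rw [hcancel]
      rw [sub_eq_zero]
      refine Finset.sum_congr rfl fun k _ => ?_
      rw [Polynomial.eval₂_mul, Polynomial.eval₂_C, Polynomial.eval₂_X_pow]
  obtain ⟨r0, hr0⟩ := hnorm (gval g) (gval_homFrac g) hintg
  exact ⟨r0, hr0⟩

-- ===== chunk 11: assembly of the Krull structure =====

theorem normal_implies_krull (hint : KIntegralRing 𝒜) (hnoeth : KNoetherian 𝒜)
    (hnorm : KNormalRing 𝒜) : IsKKrullRing 𝒜 := by
  classical
  haveI hQ : Nontrivial (QPlus 𝒜) := nontrivial_QPlus hint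
  have hcic : CIC hint := cic_of_normal hnorm hnoeth
  set ν : {p : DivIdl hint // DivIdl.IsMaxd p} → QPlus 𝒜 → ℤ := fun i x =>
    if h : HomFrac 𝒜 x ∧ x ≠ 0 then
      DivIdl.expn hcic hnoeth i.1 (DivIdl.princ (toGam hint h.1 h.2)) else 0 with hνdef
  have hν : ∀ (i : {p : DivIdl hint // DivIdl.IsMaxd p}) {x : QPlus 𝒜}
      (h1 : HomFrac 𝒜 x) (h2 : x ≠ 0),
      ν i x = DivIdl.expn hcic hnoeth i.1 (DivIdl.princ (toGam hint h1 h2)) := by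
    intro i x h1 h2
    show (if h : HomFrac 𝒜 x ∧ x ≠ 0 then
      DivIdl.expn hcic hnoeth i.1 (DivIdl.princ (toGam hint h.1 h.2)) else 0) = _
    rw [dif_pos ⟨h1, h2⟩]
  refine ⟨{p : DivIdl hint // DivIdl.IsMaxd p}, ν, ?_, ?_, ?_⟩
  · intro i
    refine ⟨?_, ?_, ?_⟩
    · intro x y hx hy hx0 hy0
      have hxy : HomFrac 𝒜 (x * y) := homFrac_mul hx hy
      have hxy0 : x * y ≠ 0 :=
        ((isUnit_of_homFrac hint hx hx0).mul (isUnit_of_homFrac hint hy hy0)).ne_zero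
      rw [hν i hxy hxy0, hν i hx hx0, hν i hy hy0]
      have htg : toGam hint hxy hxy0 = toGam hint hx hx0 * toGam hint hy hy0 := by
        apply gval_injective
        rw [← gval_mul, gval_toGam, gval_toGam, gval_toGam]
      rw [htg, DivIdl.princ_mul, DivIdl.expn_mul]
    · intro x y hx hy hxy hx0 hy0 hxy0
      rw [hν i hxy hxy0, hν i hx hx0, hν i hy hy0]
      refine DivIdl.expn_princ_add hcic hnoeth ?_ i.2
      rw [gval_toGam, gval_toGam, gval_toGam]
    · intro n
      obtain ⟨γ, hγ⟩ := DivIdl.expn_princ_surj hcic hnoeth i.2 n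
      refine ⟨gval γ, gval_homFrac γ, gval_ne_zero γ, ?_⟩
      rw [hν i (gval_homFrac γ) (gval_ne_zero γ)]
      have htg : toGam hint (gval_homFrac γ) (gval_ne_zero γ) = γ := by
        apply gval_injective
        rw [gval_toGam]
      rw [htg, hγ]
  · intro x hx hx0
    have hfin := DivIdl.expn_princ_finite hcic hnoeth (toGam hint hx hx0)
    have heq : {i : {p : DivIdl hint // DivIdl.IsMaxd p} | ν i x ≠ 0}
        ⊆ Subtype.val ⁻¹' {p : DivIdl hint | DivIdl.IsMaxd p ∧
          DivIdl.expn hcic hnoeth p (DivIdl.princ (toGam hint hx hx0)) ≠ 0} := by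
      intro i hi
      rw [Set.mem_setOf_eq, hν i hx hx0] at hi
      exact ⟨i.2, hi⟩
    exact Set.Finite.subset (Set.Finite.preimage Subtype.val_injective.injOn hfin) heq
  · intro x hx hx0
    have hiff := DivIdl.mem_Mset_iff_expn hcic hnoeth (toGam hint hx hx0)
    constructor
    · intro hall
      have hmem : toGam hint hx hx0 ∈ Mset hint := by
        rw [hiff]
        intro p hp
        have := hall ⟨p, hp⟩
        rwa [hν ⟨p, hp⟩ hx hx0] at this
      obtain ⟨r, hr⟩ := hmem
      exact ⟨r, by rw [hr, gval_toGam]⟩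
    · rintro ⟨r, hr⟩
      have hmem : toGam hint hx hx0 ∈ Mset hint := ⟨r, by rw [gval_toGam]; exact hr⟩
      intro i
      rw [hν i hx hx0]
      exact (hiff.mp hmem) i.1 i.2

end Stmt14Aux


/-- A `K`-noetherian `K`-integral graded ring is a `K`-Krull ring if and only if
it is `K`-normal. -/
theorem stmt_14 [Nontrivial R] (hint : KIntegralRing 𝒜) (hnoeth : KNoetherian 𝒜) :
    IsKKrullRing 𝒜 ↔ KNormalRing 𝒜 := by
  constructor
  · exact fun hk => Stmt14Aux.krull_implies_normal hint hk
  · exact fun hn => Stmt14Aux.normal_implies_krull hint hnoeth hn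

end
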